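/- The limit of the ε-distinguishability ratio as ε → 0⁺ equals the distinguishability ratio: lim_{ε→0} μ_{ρ,M}(ε) = inf_{σ ≠ ρ} ‖ρ − σ‖_M / ‖ρ − σ‖₁, where μ_{ρ,M}(ε) = (1/(2ε)) min{ ‖ρ − σ‖_M : ‖ρ − σ‖₁ ≥ 2ε }. -/

import Mathlib

open Matrix
open scoped ComplexOrder

namespace QSVQDH

variable {d : ℕ}

/-- Schatten 1-norm (trace norm). -/
noncomputable def trNorm (A : Matrix (Fin d) (Fin d) ℂ) : ℝ :=
  ((Matrix.posSemidef_conjTranspose_mul_self A).1.eigenvectorUnitary.1 *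
    diagonal (((↑) : ℝ → ℂ) ∘ Real.sqrt ∘ (Matrix.posSemidef_conjTranspose_mul_self A).1.eigenvalues) *
    (star (Matrix.posSemidef_conjTranspose_mul_self A).1.eigenvectorUnitary :
      Matrix (Fin d) (Fin d) ℂ)).trace.re


/-- Schatten 2-norm (Hilbert–Schmidt norm). -/
noncomputable def hsNorm (A : Matrix (Fin d) (Fin d) ℂ) : ℝ :=
  Real.sqrt ((Aᴴ * A).trace.re)

/-- Operator norm. -/
noncomputable def opNorm (A : Matrix (Fin d) (Fin d) ℂ) : ℝ :=
  ‖Matrix.toEuclideanCLM (𝕜 := ℂ) A‖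

/-- Density operator: positive semidefinite with unit trace. -/
def IsDensity (ρ : Matrix (Fin d) (Fin d) ℂ) : Prop := ρ.PosSemidef ∧ ρ.trace = 1

/-- POVM element: 0 ≤ M ≤ I. -/
def IsPOVMElem (M : Matrix (Fin d) (Fin d) ℂ) : Prop := M.PosSemidef ∧ (1 - M).PosSemidef

/-- A measurement class of binary effects: contains 0, consists of POVM elements,
is convex, and is closed under M ↦ I − M. -/
def IsMClass (Mset : Set (Matrix (Fin d) (Fin d) ℂ)) : Prop :=
  0 ∈ Mset ∧ (∀ M ∈ Mset, IsPOVMElem M) ∧ Convex ℝ Mset ∧ (∀ M ∈ Mset, 1 - M ∈ Mset)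

/-- The M-seminorm ‖Δ‖_M = sup_{M ∈ Mset} (2 tr(MΔ) − tr Δ). -/
noncomputable def Mnorm (Mset : Set (Matrix (Fin d) (Fin d) ℂ))
    (Δ : Matrix (Fin d) (Fin d) ℂ) : ℝ :=
  sSup ((fun M => 2 * (M * Δ).trace.re - Δ.trace.re) '' Mset)

/-- The ε-distinguishability ratio μ_{ρ,M}(ε). -/
noncomputable def mu (Mset : Set (Matrix (Fin d) (Fin d) ℂ))
    (ρ : Matrix (Fin d) (Fin d) ℂ) (ε : ℝ) : ℝ :=
  (1 / (2 * ε)) *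
    sInf ((fun σ => Mnorm Mset (ρ - σ)) '' {σ | IsDensity σ ∧ 2 * ε ≤ trNorm (ρ - σ)})

/-- The ε-visibility γ_{V,M}(ε), where the subspace V is given by its
orthogonal projector P. -/
noncomputable def gamma (Mset : Set (Matrix (Fin d) (Fin d) ℂ))
    (P : Matrix (Fin d) (Fin d) ℂ) (ε : ℝ) : ℝ :=
  (1 / ε) * sSup ((fun Ω =>
      sInf ((fun p : Matrix (Fin d) (Fin d) ℂ × Matrix (Fin d) (Fin d) ℂ =>
          (Ω * (p.1 - p.2)).trace.re) ''
        {p | IsDensity p.1 ∧ P * p.1 = p.1 ∧ IsDensity p.2 ∧ (p.2 * P).trace.re ≤ 1 - ε}))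
    '' Mset)

/-- The ε-visibility in its minimax (minimum) form. -/
noncomputable def gammaMin (Mset : Set (Matrix (Fin d) (Fin d) ℂ))
    (P : Matrix (Fin d) (Fin d) ℂ) (ε : ℝ) : ℝ :=
  sInf ((fun p : Matrix (Fin d) (Fin d) ℂ × Matrix (Fin d) (Fin d) ℂ =>
      (1 / (2 * ε)) * Mnorm Mset (p.1 - p.2)) ''
    {p | IsDensity p.1 ∧ P * p.1 = p.1 ∧ IsDensity p.2 ∧ (p.2 * P).trace.re ≤ 1 - ε})

/-- μ_{ρ,M}(1), defined through perfectly distinguishable (orthogonal) counterparts. -/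
noncomputable def muone (Mset : Set (Matrix (Fin d) (Fin d) ℂ))
    (ρ : Matrix (Fin d) (Fin d) ℂ) : ℝ :=
  (1 / 2) * sInf ((fun σ => Mnorm Mset (ρ - σ)) '' {σ | IsDensity σ ∧ (ρ * σ).trace = 0})

/-- The distinguishability ratio μ̂_{ρ,M}. -/
noncomputable def muhat (Mset : Set (Matrix (Fin d) (Fin d) ℂ))
    (ρ : Matrix (Fin d) (Fin d) ℂ) : ℝ :=
  sInf ((fun σ => Mnorm Mset (ρ - σ) / trNorm (ρ - σ)) '' {σ | IsDensity σ ∧ σ ≠ ρ})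

lemma psd_smul {A : Matrix (Fin d) (Fin d) ℂ} (hA : A.PosSemidef) {t : ℝ} (ht : 0 ≤ t) :
    ((t:ℂ) • A).PosSemidef := by
  constructor
  · unfold Matrix.IsHermitian
    rw [conjTranspose_smul, hA.1]
    congr 1
    simp
  · intro x
    exact (hA.smul (Complex.zero_le_real.mpr ht)).2 x

lemma trace_re_eq (B : Matrix (Fin d) (Fin d) ℂ) :
    (Bᴴ * B).trace.re = ∑ i, ∑ j, Complex.normSq (B j i) := by
  rw [Matrix.trace]
  simp only [Matrix.diag, Matrix.mul_apply, Matrix.conjTranspose_apply, Complex.re_sum]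
  congr 1; funext i; congr 1; funext j
  simp [Complex.mul_re, Complex.normSq_apply]

lemma psd_trace_re_nonneg {P : Matrix (Fin d) (Fin d) ℂ} (hP : P.PosSemidef) :
    0 ≤ P.trace.re := by
  exact (Complex.nonneg_iff.mp hP.trace_nonneg).1

lemma psd_trace_re_zero {P : Matrix (Fin d) (Fin d) ℂ} (hP : P.PosSemidef)
    (h : P.trace.re = 0) : P = 0 := by
  refine hP.trace_eq_zero_iff.mp (Complex.ext h ?_)
  exact ((Complex.nonneg_iff.mp hP.trace_nonneg).2).symm

lemma trNorm_eq_sum (A : Matrix (Fin d) (Fin d) ℂ) :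
    trNorm A = ∑ i, Real.sqrt ((posSemidef_conjTranspose_mul_self A).1.eigenvalues i) := by
  rw [trNorm, trace_mul_cycle, Unitary.coe_star_mul_self, one_mul, trace_diagonal, Complex.re_sum]
  simp

lemma trNorm_eq_cfc (A : Matrix (Fin d) (Fin d) ℂ) :
    trNorm A = (cfc Real.sqrt (Aᴴ * A)).trace.re := by
  rw [(posSemidef_conjTranspose_mul_self A).1.cfc_eq, IsHermitian.cfc, Unitary.conjStarAlgAut_apply]
  rfl

lemma trNorm_nonneg (A : Matrix (Fin d) (Fin d) ℂ) : 0 ≤ trNorm A := by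
  rw [trNorm_eq_sum]
  exact Finset.sum_nonneg fun i _ => Real.sqrt_nonneg _

lemma trNorm_eq_zero {A : Matrix (Fin d) (Fin d) ℂ} (h : trNorm A = 0) : A = 0 := by
  rw [trNorm_eq_sum] at h
  have hnn := eigenvalues_conjTranspose_mul_self_nonneg A
  have hall := (Finset.sum_eq_zero_iff_of_nonneg (fun i _ => Real.sqrt_nonneg _)).mp h
  have h2 : Aᴴ * A = 0 := by
    rw [← (posSemidef_conjTranspose_mul_self A).1.eigenvalues_eq_zero_iff]
    funext i
    have := hall i (Finset.mem_univ i)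
    rw [Real.sqrt_eq_zero (hnn i)] at this
    exact this
  exact Matrix.conjTranspose_mul_self_eq_zero.mp h2

lemma trNorm_smul (A : Matrix (Fin d) (Fin d) ℂ) {t : ℝ} (ht : 0 ≤ t) :
    trNorm ((t:ℂ) • A) = t * trNorm A := by
  rw [trNorm_eq_cfc, trNorm_eq_cfc]
  have hX : ((t:ℂ) • A)ᴴ * ((t:ℂ) • A) = (t ^ 2) • (Aᴴ * A) := by
    ext i j
    simp [Matrix.smul_apply, Complex.star_def, Complex.conj_ofReal, pow_two, mul_assoc]
  have hsa : IsSelfAdjoint (Aᴴ * A) := (posSemidef_conjTranspose_mul_self A).1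
  rw [hX, ← cfc_comp_smul (t ^ 2) Real.sqrt (Aᴴ * A) (ha := hsa)]
  have hfun : (fun x : ℝ => Real.sqrt ((t ^ 2) • x)) = fun x => t * Real.sqrt x := by
    funext x
    rw [smul_eq_mul, Real.sqrt_mul (sq_nonneg t), Real.sqrt_sq ht]
  rw [hfun, cfc_const_mul t Real.sqrt (Aᴴ * A), trace_smul, Complex.smul_re, smul_eq_mul]

lemma Mnorm_nonneg {Mset : Set (Matrix (Fin d) (Fin d) ℂ)}
    (h0 : (0 : Matrix (Fin d) (Fin d) ℂ) ∈ Mset) {Δ : Matrix (Fin d) (Fin d) ℂ}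
    (hΔ : Δ.trace.re = 0) : 0 ≤ Mnorm Mset Δ := by
  by_cases hb : BddAbove ((fun M => 2 * (M * Δ).trace.re - Δ.trace.re) '' Mset)
  · exact le_csSup hb ⟨0, h0, by simp [hΔ]⟩
  · rw [Mnorm, Real.sSup_of_not_bddAbove hb]

lemma Mnorm_smul (Mset : Set (Matrix (Fin d) (Fin d) ℂ)) (Δ : Matrix (Fin d) (Fin d) ℂ)
    {t : ℝ} (ht : 0 ≤ t) : Mnorm Mset ((t:ℂ) • Δ) = t * Mnorm Mset Δ := by
  have himg : (fun M => 2 * (M * ((t:ℂ) • Δ)).trace.re - ((t:ℂ) • Δ).trace.re) '' Mset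
      = (fun x : ℝ => t • x) '' ((fun M => 2 * (M * Δ).trace.re - Δ.trace.re) '' Mset) := by
    rw [Set.image_image]
    apply Set.image_congr'
    intro M
    rw [Matrix.mul_smul, trace_smul, trace_smul, smul_eq_mul, smul_eq_mul,
      Complex.re_ofReal_mul, Complex.re_ofReal_mul, smul_eq_mul]
    ring
  rw [Mnorm, Mnorm, himg, Set.image_smul, Real.sSup_smul_of_nonneg ht, smul_eq_mul]

/-- lim_{ε→0⁺} μ_{ρ,M}(ε) = inf_{σ ≠ ρ} ‖ρ−σ‖_M / ‖ρ−σ‖₁. -/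
theorem mu_tendsto_muhat (Mset : Set (Matrix (Fin d) (Fin d) ℂ)) (hM : IsMClass Mset)
    (ρ : Matrix (Fin d) (Fin d) ℂ) (hρ : IsDensity ρ)
    (hex : ∃ σ, IsDensity σ ∧ σ ≠ ρ) :
    Filter.Tendsto (fun ε => mu Mset ρ ε) (nhdsWithin 0 (Set.Ioi 0))
      (nhds (sInf ((fun σ => Mnorm Mset (ρ - σ) / trNorm (ρ - σ)) ''
        {σ | IsDensity σ ∧ σ ≠ ρ}))) := by
  set f : Matrix (Fin d) (Fin d) ℂ → ℝ := fun σ => Mnorm Mset (ρ - σ) / trNorm (ρ - σ) with hf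
  set T : Set (Matrix (Fin d) (Fin d) ℂ) := {σ | IsDensity σ ∧ σ ≠ ρ} with hT
  set m : ℝ := sInf (f '' T) with hm
  have htr : ∀ σ : Matrix (Fin d) (Fin d) ℂ, IsDensity σ → (ρ - σ).trace.re = 0 := by
    intro σ hσ
    rw [trace_sub, hρ.2, hσ.2]
    simp
  have hMn : ∀ σ : Matrix (Fin d) (Fin d) ℂ, IsDensity σ → 0 ≤ Mnorm Mset (ρ - σ) :=
    fun σ hσ => Mnorm_nonneg hM.1 (htr σ hσ)
  have hfnn : ∀ σ ∈ T, 0 ≤ f σ := fun σ hσ => div_nonneg (hMn σ hσ.1) (trNorm_nonneg _)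
  have hbdd : BddBelow (f '' T) := by
    refine ⟨0, ?_⟩
    rintro x ⟨σ, hσ, rfl⟩
    exact hfnn σ hσ
  obtain ⟨σ₀, hσ₀d, hσ₀ne⟩ := hex
  have hTne : (f '' T).Nonempty := ⟨f σ₀, σ₀, ⟨hσ₀d, hσ₀ne⟩, rfl⟩
  have hm0 : 0 ≤ m := le_csInf hTne (by rintro x ⟨σ, hσ, rfl⟩; exact hfnn σ hσ)
  rw [Metric.tendsto_nhdsWithin_nhds]
  intro η hη
  -- pick a near-optimal σ₁
  have hlt : sInf (f '' T) < m + η := by rw [← hm]; linarith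
  obtain ⟨x, ⟨σ₁, hσ₁T, rfl⟩, hfσ₁⟩ := (csInf_lt_iff hbdd hTne).mp hlt
  have hρσ₁ : ρ - σ₁ ≠ 0 := sub_ne_zero.mpr (Ne.symm hσ₁T.2)
  have hT1 : 0 < trNorm (ρ - σ₁) := by
    rcases lt_or_eq_of_le (trNorm_nonneg (ρ - σ₁)) with h | h
    · exact h
    · exact absurd (trNorm_eq_zero h.symm) hρσ₁
  refine ⟨trNorm (ρ - σ₁) / 2, by positivity, ?_⟩
  intro ε hε hdist
  have hε0 : 0 < ε := hε
  rw [Real.dist_eq, sub_zero, abs_of_pos hε0] at hdist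
  have h2ε : 2 * ε < trNorm (ρ - σ₁) := by linarith
  set F : Set (Matrix (Fin d) (Fin d) ℂ) :=
    {σ | IsDensity σ ∧ 2 * ε ≤ trNorm (ρ - σ)} with hF
  set S : Set ℝ := (fun σ => Mnorm Mset (ρ - σ)) '' F with hS
  have hσ₁F : σ₁ ∈ F := ⟨hσ₁T.1, h2ε.le⟩
  have hSne : S.Nonempty := ⟨_, σ₁, hσ₁F, rfl⟩
  have hSbdd : BddBelow S := by
    refine ⟨0, ?_⟩
    rintro x ⟨σ, hσ, rfl⟩
    exact hMn σ hσ.1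
  -- lower bound
  have hlow : ∀ x ∈ S, 2 * ε * m ≤ x := by
    rintro x ⟨σ, ⟨hσd, hσtr⟩, rfl⟩
    have htpos : 0 < trNorm (ρ - σ) := lt_of_lt_of_le (by linarith) hσtr
    have hσne : σ ≠ ρ := by
      intro h
      rw [h, sub_self] at htpos
      have : trNorm (0 : Matrix (Fin d) (Fin d) ℂ) = 0 := by
        have h0 : ((0:ℝ):ℂ) • (0 : Matrix (Fin d) (Fin d) ℂ) = 0 := by simp
        have := trNorm_smul (0 : Matrix (Fin d) (Fin d) ℂ) (le_refl (0:ℝ))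
        rw [h0] at this
        linarith
      linarith
    have hfm : m ≤ f σ := csInf_le hbdd ⟨σ, ⟨hσd, hσne⟩, rfl⟩
    have h1 : trNorm (ρ - σ) * m ≤ trNorm (ρ - σ) * f σ :=
      mul_le_mul_of_nonneg_left hfm htpos.le
    rw [hf] at h1
    simp only at h1
    rw [mul_div_cancel₀ _ (ne_of_gt htpos)] at h1
    have h2 : 2 * ε * m ≤ trNorm (ρ - σ) * m :=
      mul_le_mul_of_nonneg_right hσtr hm0
    linarith
  have hinf_low : 2 * ε * m ≤ sInf S := le_csInf hSne hlow
  -- upper bound via scaled state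
  set t : ℝ := 2 * ε / trNorm (ρ - σ₁) with htdef
  have ht0 : 0 < t := by positivity
  have ht1 : t ≤ 1 := by
    rw [htdef, div_le_one hT1]
    linarith
  set σ' : Matrix (Fin d) (Fin d) ℂ := ((1 - t : ℝ) : ℂ) • ρ + ((t : ℝ) : ℂ) • σ₁ with hσ'
  have hδ : ρ - σ' = (t : ℂ) • (ρ - σ₁) := by
    rw [hσ']
    push_cast
    module
  have hσ'd : IsDensity σ' := by
    constructor
    · exact (psd_smul hρ.1 (by linarith)).add (psd_smul hσ₁T.1.1 ht0.le)
    · rw [hσ', trace_add, trace_smul, trace_smul, hρ.2, hσ₁T.1.2, smul_eq_mul, smul_eq_mul]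
      push_cast
      ring
  have htrσ' : trNorm (ρ - σ') = 2 * ε := by
    rw [hδ, trNorm_smul _ ht0.le, htdef, div_mul_cancel₀ _ (ne_of_gt hT1)]
  have hσ'F : σ' ∈ F := ⟨hσ'd, le_of_eq htrσ'.symm⟩
  have hup : sInf S ≤ Mnorm Mset (ρ - σ') := csInf_le hSbdd ⟨σ', hσ'F, rfl⟩
  have hMσ' : Mnorm Mset (ρ - σ') = t * Mnorm Mset (ρ - σ₁) := by
    rw [hδ, Mnorm_smul _ _ ht0.le]
  have hmu : mu Mset ρ ε = (1 / (2 * ε)) * sInf S := rfl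
  have hεne : (2 * ε) ≠ 0 := by positivity
  have hmul : (1 / (2 * ε)) * (t * Mnorm Mset (ρ - σ₁)) = f σ₁ := by
    rw [hf]
    simp only
    rw [htdef]
    field_simp
  have hlower : m ≤ mu Mset ρ ε := by
    rw [hmu]
    have := mul_le_mul_of_nonneg_left hinf_low (by positivity : (0:ℝ) ≤ 1 / (2 * ε))
    calc m = (1 / (2 * ε)) * (2 * ε * m) := by field_simp
    _ ≤ (1 / (2 * ε)) * sInf S := this
  have hupper : mu Mset ρ ε < m + η := by
    rw [hmu]
    have h3 : (1 / (2 * ε)) * sInf S ≤ (1 / (2 * ε)) * Mnorm Mset (ρ - σ') :=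
      mul_le_mul_of_nonneg_left hup (by positivity)
    rw [hMσ', hmul] at h3
    linarith
  rw [Real.dist_eq, abs_of_nonneg (by linarith)]
  linarith

end QSVQDH
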